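/- Let Δ_1,...,Δ_n be independent {0,1}-valued random variables with P(Δ_i = 1) = p_i and P(Δ_i = 0) = q_i = 1 − p_i, where p_i ≤ 1/2 for every i. Let ξ_1 = Σ_{i=1}^n Δ_i and ξ_2 = n − ξ_1, and let C be a positive integer with P(ξ_1 < C and ξ_2 < C) > 0. Then, conditionally on the event {ξ_1 < C and ξ_2 < C}, ξ_1 is stochastically smaller than ξ_2: for every real x, P(ξ_1 > x | ξ_1 < C, ξ_2 < C) ≤ P(ξ_2 > x | ξ_1 < C, ξ_2 < C). -/

import Mathlib

open MeasureTheory ProbabilityTheory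

private lemma count_supersets' {α : Type*} [DecidableEq α] {s B : Finset α} (hBs : B ⊆ s) {k : ℕ} (hBk : B.card ≤ k) :
    ((s.powersetCard k).filter (fun A => B ⊆ A)).card = (s.card - B.card).choose (k - B.card) := by
  have h1 : ((s \ B).powersetCard (k - B.card)).card = (s.card - B.card).choose (k - B.card) := by
    rw [Finset.card_powersetCard, Finset.card_sdiff_of_subset hBs]
  rw [← h1]
  apply Finset.card_nbij' (i := fun A => A \ B) (j := fun A' => A' ∪ B)
  · intro A hA
    simp only [Finset.mem_coe, Finset.mem_filter, Finset.mem_powersetCard] at hA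
    obtain ⟨⟨hAs, hAc⟩, hBA⟩ := hA
    simp only [Finset.mem_coe, Finset.mem_powersetCard]
    exact ⟨Finset.sdiff_subset_sdiff hAs le_rfl, by rw [Finset.card_sdiff_of_subset hBA, hAc]⟩
  · intro A' hA'
    simp only [Finset.mem_coe, Finset.mem_powersetCard] at hA'
    obtain ⟨hA's, hA'c⟩ := hA'
    have hdisj : Disjoint A' B := Finset.disjoint_of_subset_left hA's (Finset.sdiff_disjoint)
    have hcard : B.card ≤ s.card := Finset.card_le_card hBs
    simp only [Finset.mem_coe, Finset.mem_filter, Finset.mem_powersetCard]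
    refine ⟨⟨Finset.union_subset (hA's.trans (Finset.sdiff_subset)) hBs, ?_⟩, Finset.subset_union_right⟩
    rw [Finset.card_union_of_disjoint hdisj, hA'c]
    omega
  · intro A hA
    simp only [Finset.mem_coe, Finset.mem_filter] at hA
    exact Finset.sdiff_union_of_subset hA.2
  · intro A' hA'
    simp only [Finset.mem_coe, Finset.mem_powersetCard] at hA'
    exact Finset.union_sdiff_cancel_right (Finset.disjoint_of_subset_left hA'.1 Finset.sdiff_disjoint)

private lemma esymm_le' {α : Type*} [DecidableEq α] (s : Finset α) (t : α → ℝ)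
    (h0 : ∀ i ∈ s, 0 ≤ t i) (h1 : ∀ i ∈ s, t i ≤ 1) (k : ℕ)
    (hk2 : s.card ≤ 2 * k) (hks : k ≤ s.card) :
    ∑ A ∈ s.powersetCard k, ∏ i ∈ A, t i ≤
      ∑ B ∈ s.powersetCard (s.card - k), ∏ i ∈ B, t i := by
  set j := s.card - k with hj
  have hjk : j ≤ k := by omega
  have hchoose_pos : 0 < k.choose j := Nat.choose_pos hjk
  have key1 : ∀ A ∈ s.powersetCard k, (k.choose j : ℝ) * ∏ i ∈ A, t i ≤
      ∑ B ∈ A.powersetCard j, ∏ i ∈ B, t i := by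
    intro A hA
    obtain ⟨hAs, hAcard⟩ := Finset.mem_powersetCard.mp hA
    have hb : ∀ B ∈ A.powersetCard j, ∏ i ∈ A, t i ≤ ∏ i ∈ B, t i := by
      intro B hB
      obtain ⟨hBA, hBcard⟩ := Finset.mem_powersetCard.mp hB
      have hprod : (∏ i ∈ A \ B, t i) * ∏ i ∈ B, t i = ∏ i ∈ A, t i :=
        Finset.prod_sdiff hBA
      rw [← hprod]
      have h1' : ∏ i ∈ A \ B, t i ≤ 1 :=
        Finset.prod_le_one (fun i hi => h0 i (hAs (Finset.mem_sdiff.mp hi).1))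
          (fun i hi => h1 i (hAs (Finset.mem_sdiff.mp hi).1))
      have h0' : 0 ≤ ∏ i ∈ B, t i :=
        Finset.prod_nonneg fun i hi => h0 i (hAs (hBA hi))
      nlinarith
    calc (k.choose j : ℝ) * ∏ i ∈ A, t i
        = ∑ _B ∈ A.powersetCard j, ∏ i ∈ A, t i := by
          rw [Finset.sum_const, Finset.card_powersetCard, hAcard, nsmul_eq_mul]
      _ ≤ ∑ B ∈ A.powersetCard j, ∏ i ∈ B, t i := Finset.sum_le_sum hb
  have swap : ∑ A ∈ s.powersetCard k, ∑ B ∈ A.powersetCard j, (∏ i ∈ B, t i)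
      = ∑ B ∈ s.powersetCard j, (((s.powersetCard k).filter (fun A => B ⊆ A)).card : ℝ) * ∏ i ∈ B, t i := by
    have step : ∀ A ∈ s.powersetCard k, ∑ B ∈ A.powersetCard j, (∏ i ∈ B, t i)
        = ∑ B ∈ s.powersetCard j, if B ⊆ A then ∏ i ∈ B, t i else 0 := by
      intro A hA
      obtain ⟨hAs, _⟩ := Finset.mem_powersetCard.mp hA
      rw [← Finset.sum_filter]
      congr 1
      ext B
      simp only [Finset.mem_powersetCard, Finset.mem_filter]
      constructor
      · rintro ⟨h1', h2'⟩; exact ⟨⟨h1'.trans hAs, h2'⟩, h1'⟩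
      · rintro ⟨⟨_, h2'⟩, h3'⟩; exact ⟨h3', h2'⟩
    rw [Finset.sum_congr rfl step, Finset.sum_comm]
    refine Finset.sum_congr rfl fun B _ => ?_
    rw [← Finset.sum_filter, Finset.sum_const, nsmul_eq_mul]
  have count_eval : ∀ B ∈ s.powersetCard j,
      (((s.powersetCard k).filter (fun A => B ⊆ A)).card : ℝ) = (k.choose j : ℝ) := by
    intro B hB
    obtain ⟨hBs, hBcard⟩ := Finset.mem_powersetCard.mp hB
    rw [count_supersets' hBs (by omega), hBcard]
    have h2 : s.card - j = k := by omega
    rw [h2, Nat.choose_symm hjk]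
  have final : (k.choose j : ℝ) * (∑ A ∈ s.powersetCard k, ∏ i ∈ A, t i) ≤
      (k.choose j : ℝ) * (∑ B ∈ s.powersetCard j, ∏ i ∈ B, t i) := by
    calc (k.choose j : ℝ) * (∑ A ∈ s.powersetCard k, ∏ i ∈ A, t i)
        = ∑ A ∈ s.powersetCard k, (k.choose j : ℝ) * ∏ i ∈ A, t i := Finset.mul_sum _ _ _
      _ ≤ ∑ A ∈ s.powersetCard k, ∑ B ∈ A.powersetCard j, ∏ i ∈ B, t i :=
          Finset.sum_le_sum key1
      _ = ∑ B ∈ s.powersetCard j, (((s.powersetCard k).filter (fun A => B ⊆ A)).card : ℝ) * ∏ i ∈ B, t i := swap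
      _ = ∑ B ∈ s.powersetCard j, (k.choose j : ℝ) * ∏ i ∈ B, t i :=
          Finset.sum_congr rfl fun B hB => by rw [count_eval B hB]
      _ = (k.choose j : ℝ) * (∑ B ∈ s.powersetCard j, ∏ i ∈ B, t i) := (Finset.mul_sum _ _ _).symm
  have hcpos : (0:ℝ) < (k.choose j : ℝ) := by exact_mod_cast hchoose_pos
  exact le_of_mul_le_mul_left final hcpos

/-- Lemma 3, conditional stochastic dominance: for independent Bernoulli variables
Δ₁,...,Δₙ with success probabilities `p i ≤ 1/2`, letting `ξ₁ = ∑ Δ i` and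
`ξ₂ = n - ξ₁`, and a positive integer capacity `C` with `P(ξ₁ < C, ξ₂ < C) > 0`,
conditionally on `{ξ₁ < C, ξ₂ < C}` the variable `ξ₁` is stochastically smaller
than `ξ₂`: for every real `x`,
`P(ξ₁ > x ∣ ξ₁ < C, ξ₂ < C) ≤ P(ξ₂ > x ∣ ξ₁ < C, ξ₂ < C)`,
where `P(A ∣ B) = P(A ∩ B) / P(B)`. -/
theorem bernoulli_sum_cond_stochastically_smaller
    {Ω : Type*} [MeasurableSpace Ω] (P : Measure Ω) [IsProbabilityMeasure P]
    (n : ℕ) (Δ : Fin n → Ω → ℝ) (p : Fin n → ℝ)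
    (hmeas : ∀ i, Measurable (Δ i))
    (h01 : ∀ i ω, Δ i ω = 0 ∨ Δ i ω = 1)
    (hlaw : ∀ i, P {ω | Δ i ω = 1} = ENNReal.ofReal (p i))
    (hp : ∀ i, p i ≤ 1 / 2)
    (hindep : iIndepFun Δ P)
    (C : ℕ) (hC : 0 < C)
    (hB : 0 < P {ω | ∑ i, Δ i ω < (C : ℝ) ∧ (n : ℝ) - ∑ i, Δ i ω < (C : ℝ)})
    (x : ℝ) :
    P ({ω | x < ∑ i, Δ i ω} ∩
        {ω | ∑ i, Δ i ω < (C : ℝ) ∧ (n : ℝ) - ∑ i, Δ i ω < (C : ℝ)}) /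
      P {ω | ∑ i, Δ i ω < (C : ℝ) ∧ (n : ℝ) - ∑ i, Δ i ω < (C : ℝ)} ≤
    P ({ω | x < (n : ℝ) - ∑ i, Δ i ω} ∩
        {ω | ∑ i, Δ i ω < (C : ℝ) ∧ (n : ℝ) - ∑ i, Δ i ω < (C : ℝ)}) /
      P {ω | ∑ i, Δ i ω < (C : ℝ) ∧ (n : ℝ) - ∑ i, Δ i ω < (C : ℝ)} := by
  classical
  -- normalized success probabilities
  set p' : Fin n → ℝ := fun i => max (p i) 0 with hp'def
  have hp'0 : ∀ i, 0 ≤ p' i := fun i => le_max_right _ _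
  have hp'h : ∀ i, p' i ≤ 1 / 2 := fun i => max_le (hp i) (by norm_num)
  set q' : Fin n → ℝ := fun i => 1 - p' i with hq'def
  have hq'pos : ∀ i, 0 < q' i := fun i => by have := hp'h i; simp only [hq'def]; linarith
  have hq'le : ∀ i, p' i ≤ q' i := fun i => by have := hp'h i; simp only [hq'def]; linarith
  have hlaw1 : ∀ i, P {ω | Δ i ω = 1} = ENNReal.ofReal (p' i) := by
    intro i
    rcases le_total (p i) 0 with h | h
    · rw [hlaw i, hp'def]
      simp only [max_eq_right h]
      rw [ENNReal.ofReal_eq_zero.mpr h, ENNReal.ofReal_zero]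
    · rw [hlaw i, hp'def]
      simp only [max_eq_left h]
  have hmeas1 : ∀ i, MeasurableSet {ω | Δ i ω = 1} := fun i => hmeas i (measurableSet_singleton 1)
  have hset0 : ∀ i, {ω | Δ i ω = 0} = {ω | Δ i ω = 1}ᶜ := by
    intro i; ext ω
    simp only [Set.mem_setOf_eq, Set.mem_compl_iff]
    constructor
    · intro h h1; rw [h1] at h; norm_num at h
    · intro h; exact (h01 i ω).resolve_right h
  have hlaw0 : ∀ i, P {ω | Δ i ω = 0} = ENNReal.ofReal (q' i) := by
    intro i
    rw [hset0 i, measure_compl (hmeas1 i) (measure_ne_top P _), measure_univ, hlaw1 i,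
      hq'def, ← ENNReal.ofReal_one, ← ENNReal.ofReal_sub _ (hp'0 i)]
  -- weights
  set w : Finset (Fin n) → ℝ := fun A => ∏ i, (if i ∈ A then p' i else q' i) with hwdef
  have hw0 : ∀ A, 0 ≤ w A := by
    intro A
    refine Finset.prod_nonneg fun i _ => ?_
    by_cases h : i ∈ A <;> simp [h, hp'0 i, (hq'pos i).le]
  -- elementary events
  set Ev : Finset (Fin n) → Set Ω := fun A => ⋂ i, Δ i ⁻¹' {if i ∈ A then (1:ℝ) else 0} with hEvdef
  have hmemEv : ∀ (ω : Ω) (A : Finset (Fin n)),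
      ω ∈ Ev A ↔ ∀ i, Δ i ω = (if i ∈ A then 1 else 0) := by
    intro ω A; simp [hEvdef, Set.mem_iInter]
  have hEvMeas : ∀ A, MeasurableSet (Ev A) :=
    fun A => MeasurableSet.iInter fun i => hmeas i (measurableSet_singleton _)
  have hEvP : ∀ A : Finset (Fin n), P (Ev A) = ENNReal.ofReal (w A) := by
    intro A
    have h1 : Ev A = ⋂ i ∈ Finset.univ, Δ i ⁻¹' {if i ∈ A then (1:ℝ) else 0} := by
      simp [hEvdef]
    have h2 := hindep.measure_inter_preimage_eq_mul
      (sets := fun i => {if i ∈ A then (1:ℝ) else 0}) Finset.univ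
      (fun i _ => measurableSet_singleton _)
    rw [h1, h2, hwdef,
      ENNReal.ofReal_prod_of_nonneg (fun i _ => by
        by_cases h : i ∈ A <;> simp [h, hp'0 i, (hq'pos i).le])]
    refine Finset.prod_congr rfl fun i _ => ?_
    by_cases h : i ∈ A
    · simp only [h, if_true]
      have hpre : Δ i ⁻¹' {(1:ℝ)} = {ω | Δ i ω = 1} := rfl
      rw [hpre, hlaw1 i]
    · simp only [h, if_false]
      have hpre : Δ i ⁻¹' {(0:ℝ)} = {ω | Δ i ω = 0} := rfl
      rw [hpre, hlaw0 i]
  -- sum of the Δ's on an elementary event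
  have hScard : ∀ (A : Finset (Fin n)) (ω : Ω), ω ∈ Ev A → (∑ i, Δ i ω) = (A.card : ℝ) := by
    intro A ω hω
    rw [hmemEv] at hω
    rw [Finset.sum_congr rfl fun i _ => hω i]
    simp [Finset.sum_ite_mem]
  have hcover : ∀ ω : Ω, ω ∈ Ev (Finset.univ.filter fun i => Δ i ω = 1) := by
    intro ω
    rw [hmemEv]
    intro i
    by_cases h : Δ i ω = 1
    · simp [h]
    · simp [h, (h01 i ω).resolve_right h]
  -- master formula
  have hkey : ∀ χ : ℝ → Prop, P {ω | χ (∑ i, Δ i ω)} =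
      ENNReal.ofReal
        (∑ A ∈ Finset.univ.powerset.filter (fun A : Finset (Fin n) => χ (A.card : ℝ)), w A) := by
    intro χ
    have hset : {ω | χ (∑ i, Δ i ω)} =
        ⋃ A ∈ Finset.univ.powerset.filter (fun A : Finset (Fin n) => χ (A.card : ℝ)), Ev A := by
      ext ω
      simp only [Set.mem_setOf_eq, Set.mem_iUnion, exists_prop, Finset.mem_filter,
        Finset.mem_powerset]
      constructor
      · intro h
        refine ⟨Finset.univ.filter fun i => Δ i ω = 1, ⟨Finset.subset_univ _, ?_⟩, hcover ω⟩
        rwa [← hScard _ ω (hcover ω)]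
      · rintro ⟨A, hA, hω⟩
        rw [hScard A ω hω]; exact hA.2
    rw [hset, measure_biUnion_finset ?_ (fun A _ => hEvMeas A)]
    · rw [ENNReal.ofReal_sum_of_nonneg (fun A _ => hw0 A)]
      exact Finset.sum_congr rfl fun A _ => hEvP A
    · intro A hA A' hA' hne
      rw [Function.onFun, Set.disjoint_left]
      intro ω hωA hωA'
      apply hne
      ext i
      have h1 := (hmemEv ω A).mp hωA i
      have h2 := (hmemEv ω A').mp hωA' i
      by_cases hiA : i ∈ A <;> by_cases hiA' : i ∈ A' <;>
        simp only [hiA, hiA', if_true, if_false] at h1 h2 ⊢ <;>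
        first
          | exact iff_of_true hiA hiA'
          | exact iff_of_false hiA hiA'
          | (exfalso; rw [h1] at h2; norm_num at h2)
          | (exfalso; rw [h2] at h1; norm_num at h1)
  -- grouping by cardinality
  set F : ℕ → ℝ := fun k => ∑ A ∈ Finset.powersetCard k Finset.univ, w A with hFdef
  have hcardu : (Finset.univ : Finset (Fin n)).card = n := by simp
  have hgroup : ∀ χ : ℝ → Prop,
      ∑ A ∈ Finset.univ.powerset.filter (fun A : Finset (Fin n) => χ (A.card : ℝ)), w A
        = ∑ k ∈ Finset.range (n+1), if χ (k : ℝ) then F k else 0 := by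
    intro χ
    rw [Finset.sum_filter, Finset.sum_powerset, hcardu]
    refine Finset.sum_congr rfl fun k hk => ?_
    have hc : ∀ A ∈ Finset.powersetCard k (Finset.univ : Finset (Fin n)),
        (if χ (A.card : ℝ) then w A else 0) = (if χ (k:ℝ) then w A else 0) := by
      intro A hA
      rw [(Finset.mem_powersetCard.mp hA).2]
    rw [Finset.sum_congr rfl hc]
    by_cases h : χ (k:ℝ) <;> simp [h, hFdef]
  -- the key per-cardinality inequality
  have hFmain : ∀ k : ℕ, k ≤ n → n ≤ 2 * k → F k ≤ F (n - k) := by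
    intro k hkn hk2
    have hw_eq : ∀ A : Finset (Fin n), w A = (∏ i, q' i) * ∏ i ∈ A, (p' i / q' i) := by
      intro A
      have hsplit : w A = (∏ i ∈ Finset.univ \ A, q' i) * ∏ i ∈ A, p' i := by
        show (∏ i, (if i ∈ A then p' i else q' i)) = _
        rw [← Finset.prod_sdiff (Finset.subset_univ A)]
        congr 1
        · exact Finset.prod_congr rfl fun i hi => by simp [(Finset.mem_sdiff.mp hi).2]
        · exact Finset.prod_congr rfl fun i hi => by simp [hi]
      have h2 : ∏ i ∈ A, p' i = (∏ i ∈ A, q' i) * ∏ i ∈ A, (p' i / q' i) := by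
        rw [← Finset.prod_mul_distrib]
        refine Finset.prod_congr rfl fun i _ => ?_
        rw [mul_comm, div_mul_cancel₀ _ (hq'pos i).ne']
      have h3 : (∏ i ∈ Finset.univ \ A, q' i) * ∏ i ∈ A, q' i = ∏ i, q' i :=
        Finset.prod_sdiff (Finset.subset_univ A)
      rw [hsplit, h2, ← mul_assoc, h3]
    have hF_eq : ∀ m, F m = (∏ i, q' i) *
        ∑ A ∈ Finset.powersetCard m Finset.univ, ∏ i ∈ A, (p' i / q' i) := by
      intro m
      rw [hFdef, Finset.mul_sum]
      exact Finset.sum_congr rfl fun A _ => hw_eq A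
    rw [hF_eq, hF_eq]
    refine mul_le_mul_of_nonneg_left ?_ (Finset.prod_nonneg fun i _ => (hq'pos i).le)
    have hes := esymm_le' (Finset.univ : Finset (Fin n)) (fun i => p' i / q' i)
      (fun i _ => div_nonneg (hp'0 i) (hq'pos i).le)
      (fun i _ => (div_le_one (hq'pos i)).mpr (hq'le i)) k
      (by rw [hcardu]; omega) (by rw [hcardu]; omega)
    rwa [hcardu] at hes
  -- rewrite both numerators
  obtain ⟨χ₁, hχ₁def⟩ : ∃ χ : ℝ → Prop, χ = fun s => x < s ∧ (s < (C:ℝ) ∧ (n : ℝ) - s < (C:ℝ)) :=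
    ⟨_, rfl⟩
  obtain ⟨χ₂, hχ₂def⟩ : ∃ χ : ℝ → Prop,
      χ = fun s => x < (n:ℝ) - s ∧ (s < (C:ℝ) ∧ (n : ℝ) - s < (C:ℝ)) := ⟨_, rfl⟩
  have e1 : {ω | x < ∑ i, Δ i ω} ∩
      {ω | ∑ i, Δ i ω < (C : ℝ) ∧ (n : ℝ) - ∑ i, Δ i ω < (C : ℝ)}
      = {ω | χ₁ (∑ i, Δ i ω)} := by
    ext ω; rw [hχ₁def]; simp only [Set.mem_inter_iff, Set.mem_setOf_eq]
  have e2 : {ω | x < (n : ℝ) - ∑ i, Δ i ω} ∩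
      {ω | ∑ i, Δ i ω < (C : ℝ) ∧ (n : ℝ) - ∑ i, Δ i ω < (C : ℝ)}
      = {ω | χ₂ (∑ i, Δ i ω)} := by
    ext ω; rw [hχ₂def]; simp only [Set.mem_inter_iff, Set.mem_setOf_eq]
  rw [e1, e2, hkey χ₁, hkey χ₂, hgroup χ₁, hgroup χ₂]
  refine ENNReal.div_le_div_right (ENNReal.ofReal_le_ofReal ?_) _
  -- reflect the right-hand sum
  have hreflect : ∀ G : ℕ → ℝ,
      ∑ k ∈ Finset.range (n+1), G (n - k) = ∑ k ∈ Finset.range (n+1), G k := by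
    intro G
    have := Finset.sum_range_reflect G (n+1)
    simpa using this
  have hrhs : ∑ k ∈ Finset.range (n+1), (if χ₂ (k:ℝ) then F k else 0)
      = ∑ k ∈ Finset.range (n+1), (if χ₁ (k:ℝ) then F (n - k) else 0) := by
    rw [← hreflect (fun k => if χ₂ (k:ℝ) then F k else 0)]
    refine Finset.sum_congr rfl fun k hk => ?_
    have hkn : k ≤ n := by
      have := Finset.mem_range.mp hk; omega
    have hcast : ((n - k : ℕ):ℝ) = (n:ℝ) - k := by
      rw [Nat.cast_sub hkn]
    have hiff : χ₂ ((n - k : ℕ):ℝ) ↔ χ₁ (k:ℝ) := by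
      rw [hcast]
      simp only [hχ₁def, hχ₂def]
      constructor
      · rintro ⟨ha, hb, hc⟩
        constructor
        · linarith
        · exact ⟨by linarith, by linarith⟩
      · rintro ⟨ha, hb, hc⟩
        constructor
        · linarith
        · exact ⟨by linarith, by linarith⟩
    rw [if_congr hiff rfl rfl]
  rw [hrhs]
  -- pairing argument
  have pair : ∀ k ∈ Finset.range (n+1),
      (if χ₁ ((k:ℕ):ℝ) then F k else 0) + (if χ₁ ((n - k : ℕ):ℝ) then F (n - k) else 0)
        ≤ (if χ₁ ((k:ℕ):ℝ) then F (n - k) else 0)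
          + (if χ₁ ((n - k : ℕ):ℝ) then F (n - (n - k)) else 0) := by
    intro k hk
    have hkn : k ≤ n := by
      have := Finset.mem_range.mp hk; omega
    have hnn : n - (n - k) = k := by omega
    have hcast : ((n - k : ℕ):ℝ) = (n:ℝ) - k := by rw [Nat.cast_sub hkn]
    rw [hnn]
    by_cases h1 : χ₁ ((k:ℕ):ℝ) <;> by_cases h2 : χ₁ ((n - k : ℕ):ℝ)
    · simp only [h1, h2, if_true]
      linarith
    · simp only [h1, h2, if_true, if_false]
      -- here n < 2k
      have h1' := h1
      rw [hχ₁def] at h1'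
      obtain ⟨hx1, hwin⟩ := h1'
      have hnx : ¬ (x < (n:ℝ) - (k:ℝ)) := by
        intro hcon
        apply h2
        rw [hχ₁def, hcast]
        refine ⟨hcon, by linarith, by linarith⟩
      have hlt : (n:ℝ) < 2 * (k:ℝ) := by
        push_neg at hnx
        linarith
      have hn2k : n ≤ 2 * k := by exact_mod_cast hlt.le
      have := hFmain k hkn hn2k
      linarith
    · simp only [h1, h2, if_true, if_false]
      -- here n - k > k
      have h2' := h2
      rw [hχ₁def] at h2'
      obtain ⟨hx1', hwin⟩ := h2'
      have hx1 : x < (n:ℝ) - (k:ℝ) := by rwa [hcast] at hx1'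
      have hnx : ¬ (x < (k:ℝ)) := by
        intro hcon
        apply h1
        rw [hχ₁def]
        rw [hcast] at hwin
        refine ⟨hcon, by linarith, by linarith⟩
      have hlt : 2 * (k:ℝ) < (n:ℝ) := by
        push_neg at hnx
        linarith
      have h2k : n ≤ 2 * (n - k) := by
        have : 2 * k < n := by exact_mod_cast hlt
        omega
      have hle : n - k ≤ n := by omega
      have := hFmain (n - k) hle h2k
      rw [hnn] at this
      linarith
    · simp [h1, h2]
  have hsum := Finset.sum_le_sum pair
  rw [Finset.sum_add_distrib, Finset.sum_add_distrib] at hsum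
  have r1 : ∑ k ∈ Finset.range (n+1), (if χ₁ ((n - k : ℕ):ℝ) then F (n - k) else 0)
      = ∑ k ∈ Finset.range (n+1), (if χ₁ ((k:ℕ):ℝ) then F k else 0) :=
    hreflect (fun k => if χ₁ ((k:ℕ):ℝ) then F k else 0)
  have r2 : ∑ k ∈ Finset.range (n+1), (if χ₁ ((n - k : ℕ):ℝ) then F (n - (n - k)) else 0)
      = ∑ k ∈ Finset.range (n+1), (if χ₁ ((k:ℕ):ℝ) then F (n - k) else 0) :=
    hreflect (fun k => if χ₁ ((k:ℕ):ℝ) then F (n - k) else 0)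
  rw [r1, r2] at hsum
  linarith
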